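/- Let F be a finite field with |F| = q and let t > q. Define G_t = { primes p : q < p ≤ t and the order of q in (ℤ/pℤ)^× is at least (log_q t)² } and π(t) the number of primes ≤ t. Then lim_{t→∞} |G_t|/π(t) = 1. -/

import Mathlib

open Filter Finset

private lemma cb_le_pow (n : ℕ) (hn : 0 < n) :
    Nat.centralBinom n ≤ (2 * n) ^ Nat.primeCounting (2 * n) := by
  have h0 : Nat.centralBinom n ≠ 0 := Nat.centralBinom_ne_zero n
  conv_lhs => rw [← Nat.factorization_prod_pow_eq_self h0]
  rw [Nat.primeCounting, Nat.primeCounting', Nat.count_eq_card_filter_range]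
  refine le_trans (Finset.prod_le_pow_card _ _ (2 * n) ?_) ?_
  · intro p hp
    rw [Nat.centralBinom]
    exact Nat.pow_factorization_choose_le (by omega)
  · apply Nat.pow_le_pow_right (by omega)
    apply Finset.card_le_card
    intro p hp
    rw [Nat.support_factorization, Nat.mem_primeFactors] at hp
    have := Nat.le_two_mul_of_factorization_centralBinom_pos
      (Nat.Prime.factorization_pos_of_dvd hp.1 h0 hp.2.1)
    simp only [Finset.mem_filter, Finset.mem_range]
    exact ⟨by omega, hp.1⟩

private lemma cheb_aux (n : ℕ) (hn : 4 ≤ n) :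
    2 * n < (Nat.log 2 (2 * n) + 1) * (Nat.primeCounting (2 * n) + 1) := by
  have h1 : 4 ^ n < n * Nat.centralBinom n := Nat.four_pow_lt_mul_centralBinom n hn
  have h2 : n * Nat.centralBinom n ≤ (2 * n) ^ (Nat.primeCounting (2 * n) + 1) := by
    calc n * Nat.centralBinom n ≤ (2 * n) * (2 * n) ^ Nat.primeCounting (2 * n) :=
          Nat.mul_le_mul (by omega) (cb_le_pow n (by omega))
    _ = _ := (pow_succ' _ _).symm
  have h3 : (2 * n) ^ (Nat.primeCounting (2 * n) + 1) ≤
      2 ^ ((Nat.log 2 (2 * n) + 1) * (Nat.primeCounting (2 * n) + 1)) := by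
    rw [pow_mul]
    exact Nat.pow_le_pow_left (Nat.lt_pow_succ_log_self (by omega) _).le _
  have h4 : 2 ^ (2 * n) < 2 ^ ((Nat.log 2 (2 * n) + 1) * (Nat.primeCounting (2 * n) + 1)) := by
    calc 2 ^ (2 * n) = 4 ^ n := by rw [pow_mul]; norm_num
    _ < _ := lt_of_lt_of_le h1 (le_trans h2 h3)
  exact (Nat.pow_lt_pow_iff_right (le_refl 2)).mp h4

/-- A Chebyshev-type lower bound for the prime counting function. -/
private lemma cheb (m : ℕ) (hm : 8 ≤ m) :
    m ≤ (Nat.log 2 m + 1) * (Nat.primeCounting m + 1) := by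
  have h := cheb_aux (m / 2) (by omega)
  calc m ≤ 2 * (m / 2) + 1 := by omega
  _ ≤ (Nat.log 2 (2 * (m / 2)) + 1) * (Nat.primeCounting (2 * (m / 2)) + 1) := h
  _ ≤ _ := by
      apply Nat.mul_le_mul
      · have := Nat.log_mono_right (b := 2) (show 2 * (m / 2) ≤ m by omega)
        omega
      · have := Nat.monotone_primeCounting (show 2 * (m / 2) ≤ m by omega)
        omega

private lemma card_bad (q K : ℕ) (hq : 2 ≤ q) (hK : 1 ≤ K) (s : Finset ℕ)
    (h : ∀ p ∈ s, p.Prime ∧ q < p ∧ orderOf ((q : ℕ) : ZMod p) < K) :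
    s.card < K ^ 2 := by
  set M : ℕ := ∏ d ∈ Finset.Ico 1 K, (q ^ d - 1) with hM
  have hMpos : 0 < M := by
    apply Finset.prod_pos
    intro d hd
    have : 1 ≤ d := (Finset.mem_Ico.mp hd).1
    have : 2 ≤ q ^ d := le_trans hq (Nat.le_self_pow (by omega) q)
    omega
  have key : ∀ p ∈ s, p ∣ M := by
    intro p hps
    obtain ⟨hp, hqp, hord⟩ := h p hps
    haveI : Fact p.Prime := ⟨hp⟩
    set d := orderOf ((q : ℕ) : ZMod p) with hd
    have hx : ((q : ℕ) : ZMod p) ≠ 0 := by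
      rw [Ne, ZMod.natCast_eq_zero_iff]
      intro hdvd
      exact absurd (Nat.le_of_dvd (by omega) hdvd) (by omega)
    obtain ⟨u, hu⟩ := isUnit_iff_ne_zero.mpr hx
    have hdpos : 0 < d := by
      rw [hd, ← hu, orderOf_units]
      exact orderOf_pos u
    have hpow : ((q : ℕ) : ZMod p) ^ d = 1 := pow_orderOf_eq_one _
    have hmod : q ^ d ≡ 1 [MOD p] := by
      rw [← ZMod.natCast_eq_natCast_iff]
      push_cast
      exact hpow
    have h1 : 1 ≤ q ^ d := Nat.one_le_pow _ _ (by omega)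
    have hdvd1 : p ∣ q ^ d - 1 := (Nat.modEq_iff_dvd' h1).mp hmod.symm
    exact hdvd1.trans (Finset.dvd_prod_of_mem _ (Finset.mem_Ico.mpr ⟨hdpos, hord⟩))
  have hproddvd : (∏ p ∈ s, p) ∣ M :=
    Finset.prod_primes_dvd M (fun p hp => (h p hp).1.prime) key
  have hlb : (q + 1) ^ s.card ≤ ∏ p ∈ s, p := by
    apply Finset.pow_card_le_prod
    intro p hp
    exact (h p hp).2.1
  have hub : M ≤ q ^ (K * K) := by
    calc M ≤ ∏ d ∈ Finset.Ico 1 K, q ^ d := by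
          apply Finset.prod_le_prod'
          intro d _
          omega
    _ = q ^ (∑ d ∈ Finset.Ico 1 K, d) := Finset.prod_pow_eq_pow_sum _ _ _
    _ ≤ q ^ (K * K) := by
        apply Nat.pow_le_pow_right (by omega)
        calc (∑ d ∈ Finset.Ico 1 K, d) ≤ (Finset.Ico 1 K).card * K := by
              apply Finset.sum_le_card_nsmul
              intro d hd
              exact le_of_lt (Finset.mem_Ico.mp hd).2
        _ ≤ K * K := by
            rw [Nat.card_Ico]
            exact Nat.mul_le_mul (by omega) (le_refl K)
  have hlt : (q + 1) ^ s.card < (q + 1) ^ (K * K) := by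
    calc (q + 1) ^ s.card ≤ M := le_trans hlb (Nat.le_of_dvd hMpos hproddvd)
    _ ≤ q ^ (K * K) := hub
    _ < (q + 1) ^ (K * K) := Nat.pow_lt_pow_left (by omega) (by positivity)
  have := (Nat.pow_lt_pow_iff_right (by omega : 2 ≤ q + 1)).mp hlt
  rw [pow_two]
  exact this

private lemma nat_card_eq (q t : ℕ) :
    Nat.card {p : ℕ // p.Prime ∧ q < p ∧ p ≤ t ∧
        (Real.logb q t) ^ 2 ≤ (orderOf (q : ZMod p) : ℝ)}
    = ((Finset.range (t+1)).filter (fun p => p.Prime ∧ q < p ∧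
        (Real.logb q t) ^ 2 ≤ ((orderOf (q : ZMod p) : ℕ) : ℝ))).card := by
  classical
  have hset : {p : ℕ | p.Prime ∧ q < p ∧ p ≤ t ∧
      (Real.logb q t) ^ 2 ≤ ((orderOf (q : ZMod p) : ℕ) : ℝ)}
      = ↑((Finset.range (t+1)).filter (fun p => p.Prime ∧ q < p ∧
        (Real.logb q t) ^ 2 ≤ ((orderOf (q : ZMod p) : ℕ) : ℝ))) := by
    ext p
    simp only [Set.mem_setOf_eq, Finset.coe_filter, Finset.mem_range, Nat.lt_succ_iff]
    tauto
  calc Nat.card {p : ℕ // p.Prime ∧ q < p ∧ p ≤ t ∧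
        (Real.logb q t) ^ 2 ≤ ((orderOf (q : ZMod p) : ℕ) : ℝ)}
      = ({p : ℕ | p.Prime ∧ q < p ∧ p ≤ t ∧
        (Real.logb q t) ^ 2 ≤ ((orderOf (q : ZMod p) : ℕ) : ℝ)} : Set ℕ).ncard :=
        (Nat.card_coe_set_eq _)
  _ = _ := by rw [hset, Set.ncard_coe_finset]

private lemma logb_le (q t : ℕ) (hq : 2 ≤ q) (ht : 1 ≤ t) :
    Real.logb q t ≤ ((Nat.log q t : ℕ) : ℝ) + 1 := by
  have hq1 : (1 : ℝ) < q := by exact_mod_cast hq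
  have h2 : (t : ℝ) ≤ (q : ℝ) ^ (Nat.log q t + 1) := by
    exact_mod_cast (Nat.lt_pow_succ_log_self (by omega) t).le
  have ht0 : (0 : ℝ) < t := by exact_mod_cast ht
  calc Real.logb q t ≤ Real.logb q ((q : ℝ) ^ (Nat.log q t + 1)) :=
        Real.logb_le_logb_of_le hq1 ht0 h2
  _ = ((Nat.log q t : ℕ) : ℝ) + 1 := by
      rw [Real.logb_pow, Real.logb_self_eq_one hq1]
      push_cast; ring

private lemma count_lb (q t : ℕ) (hq : 2 ≤ q) (ht : 1 ≤ t) :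
    Nat.primeCounting t ≤ ((Finset.range (t+1)).filter (fun p => p.Prime ∧ q < p ∧
        (Real.logb q t) ^ 2 ≤ ((orderOf (q : ZMod p) : ℕ) : ℝ))).card
      + ((q + 1) + ((Nat.log q t + 1)^2)^2) := by
  classical
  set K : ℕ := (Nat.log q t + 1)^2 with hK
  set A : Finset ℕ := (Finset.range (t+1)).filter (fun p => p.Prime ∧ q < p ∧
      (Real.logb q t) ^ 2 ≤ ((orderOf (q : ZMod p) : ℕ) : ℝ)) with hA
  set B : Finset ℕ := (Finset.range (q+1)).filter Nat.Prime with hB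
  set C : Finset ℕ := (Finset.range (t+1)).filter (fun p => p.Prime ∧ q < p ∧
      orderOf ((q : ℕ) : ZMod p) < K) with hC
  have hsub : (Finset.range (t+1)).filter Nat.Prime ⊆ A ∪ (B ∪ C) := by
    intro p hp
    rw [Finset.mem_filter, Finset.mem_range] at hp
    obtain ⟨hpt, hpp⟩ := hp
    by_cases hpq : p ≤ q
    · apply Finset.mem_union_right
      apply Finset.mem_union_left
      rw [hB, Finset.mem_filter, Finset.mem_range]
      exact ⟨by omega, hpp⟩
    · by_cases hord : (Real.logb q t) ^ 2 ≤ ((orderOf ((q : ℕ) : ZMod p) : ℕ) : ℝ)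
      · apply Finset.mem_union_left
        rw [hA, Finset.mem_filter, Finset.mem_range]
        exact ⟨hpt, hpp, by omega, hord⟩
      · apply Finset.mem_union_right
        apply Finset.mem_union_right
        rw [hC, Finset.mem_filter, Finset.mem_range]
        refine ⟨hpt, hpp, by omega, ?_⟩
        push_neg at hord
        have h0 : (0 : ℝ) ≤ Real.logb q t :=
          Real.logb_nonneg (by exact_mod_cast hq) (by exact_mod_cast ht)
        have h1 : (Real.logb q t) ^ 2 ≤ ((K : ℕ) : ℝ) := by
          rw [hK]
          push_cast
          calc (Real.logb q t) ^ 2 ≤ (((Nat.log q t : ℕ) : ℝ) + 1) ^ 2 :=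
                pow_le_pow_left₀ h0 (logb_le q t hq ht) 2
          _ = _ := by push_cast; ring
        exact_mod_cast lt_of_lt_of_le hord h1
  calc Nat.primeCounting t = ((Finset.range (t+1)).filter Nat.Prime).card := by
        rw [Nat.primeCounting, Nat.primeCounting', Nat.count_eq_card_filter_range]
  _ ≤ (A ∪ (B ∪ C)).card := Finset.card_le_card hsub
  _ ≤ A.card + (B ∪ C).card := Finset.card_union_le _ _
  _ ≤ A.card + (B.card + C.card) := by
      have := Finset.card_union_le B C
      omega
  _ ≤ A.card + ((q + 1) + K^2) := by
      have hBc : B.card ≤ q + 1 := le_trans (Finset.card_filter_le _ _) (by simp)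
      have hCc : C.card < K^2 := by
        apply card_bad q K hq (Nat.one_le_pow _ _ (by omega))
        intro p hp
        rw [hC, Finset.mem_filter] at hp
        exact hp.2
      omega

private lemma count_ub (q t : ℕ) :
    ((Finset.range (t+1)).filter (fun p => p.Prime ∧ q < p ∧
        (Real.logb q t) ^ 2 ≤ ((orderOf (q : ZMod p) : ℕ) : ℝ))).card
      ≤ Nat.primeCounting t := by
  classical
  rw [Nat.primeCounting, Nat.primeCounting', Nat.count_eq_card_filter_range]
  apply Finset.card_le_card
  apply Finset.monotone_filter_right
  intro p _ hp
  exact hp.1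

private lemma bad_tendsto_zero (q : ℕ) (hq : 2 ≤ q) :
    Filter.Tendsto
      (fun t : ℕ => (((q + 1) + ((Nat.log q t + 1)^2)^2 : ℕ) : ℝ) / (Nat.primeCounting t : ℝ))
      Filter.atTop (nhds 0) := by
  have hlogt : Filter.Tendsto (fun t : ℕ => Real.log t) atTop atTop :=
    Real.tendsto_log_atTop.comp tendsto_natCast_atTop_atTop
  apply squeeze_zero'
  · filter_upwards [eventually_ge_atTop 2] with t ht
    have h1 : (0:ℝ) < Nat.primeCounting t := by
      have : Nat.primeCounting t ≠ 0 := by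
        rw [Ne, Nat.primeCounting_eq_zero_iff]; omega
      exact_mod_cast Nat.pos_of_ne_zero this
    positivity
  · filter_upwards [eventually_ge_atTop 8, hlogt.eventually_ge_atTop 1,
      hlogt.eventually_ge_atTop ((q:ℝ) + 2)] with t ht8 hL1 hLq
    set L : ℝ := Real.log t with hLdef
    set x : ℝ := (t : ℝ) with hxdef
    have hxpos : (0:ℝ) < x := by rw [hxdef]; exact_mod_cast (by omega : 0 < t)
    have hπ1 : 1 ≤ Nat.primeCounting t := by
      have : Nat.primeCounting t ≠ 0 := by
        rw [Ne, Nat.primeCounting_eq_zero_iff]; omega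
      omega
    have hπpos : (0:ℝ) < (Nat.primeCounting t : ℝ) := by exact_mod_cast hπ1
    -- Nat.log 2 t ≤ 2 L
    have hℓ : ((Nat.log 2 t : ℕ) : ℝ) ≤ 2 * L := by
      have hp : (2:ℝ) ^ (Nat.log 2 t) ≤ x := by
        rw [hxdef]; exact_mod_cast Nat.pow_log_le_self 2 (by omega : t ≠ 0)
      have hlog : ((Nat.log 2 t : ℕ) : ℝ) * Real.log 2 ≤ L := by
        rw [hLdef, ← Real.log_pow]
        exact Real.log_le_log (by positivity) hp
      have h2 : (0.6931471803 : ℝ) < Real.log 2 := Real.log_two_gt_d9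
      nlinarith [(Nat.cast_nonneg (Nat.log 2 t) : (0:ℝ) ≤ (Nat.log 2 t : ℝ))]
    -- Chebyshev: x ≤ 6 L π
    have hcheb : x ≤ 6 * L * (Nat.primeCounting t : ℝ) := by
      have h := cheb t ht8
      have h' : x ≤ (((Nat.log 2 t) + 1 : ℕ) : ℝ) * ((Nat.primeCounting t + 1 : ℕ) : ℝ) := by
        rw [hxdef]; exact_mod_cast h
      push_cast at h'
      have hπr : (1:ℝ) ≤ (Nat.primeCounting t : ℝ) := by exact_mod_cast hπ1
      nlinarith [(Nat.cast_nonneg (Nat.log 2 t) : (0:ℝ) ≤ (Nat.log 2 t : ℝ)), hπpos,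
        mul_nonneg (by linarith : (0:ℝ) ≤ 2*L - (Nat.log 2 t : ℝ))
          (by linarith : (0:ℝ) ≤ (Nat.primeCounting t : ℝ) + 1),
        mul_nonneg (by linarith : (0:ℝ) ≤ L - 1)
          (by linarith : (0:ℝ) ≤ (Nat.primeCounting t : ℝ) + 1),
        mul_nonneg (by positivity : (0:ℝ) ≤ 3*L)
          (by linarith : (0:ℝ) ≤ (Nat.primeCounting t : ℝ) - 1)]
    -- bad ≤ 83 L^4
    have hbad : (((q + 1) + ((Nat.log q t + 1)^2)^2 : ℕ) : ℝ) ≤ 83 * L^4 := by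
      have hq2 : ((Nat.log q t : ℕ) : ℝ) ≤ 2 * L := by
        have hmono : Nat.log q t ≤ Nat.log 2 t := Nat.log_anti_left (by norm_num) hq
        refine le_trans ?_ hℓ
        exact_mod_cast hmono
      push_cast
      have hLL : ((Nat.log q t : ℕ) : ℝ) + 1 ≤ 3 * L := by nlinarith
      have h4 : (((Nat.log q t : ℕ) : ℝ) + 1)^4 ≤ (3*L)^4 := by
        apply pow_le_pow_left₀ (by positivity) hLL
      have hL2 : 1 ≤ L^2 := by nlinarith
      have hL3 : 1 ≤ L^3 := by nlinarith [hL1, hL2]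
      have hL4 : L ≤ L ^ 4 := by nlinarith [hL1, hL3]
      have h4' : ((((Nat.log q t : ℕ) : ℝ) + 1)^2)^2 ≤ 81 * L^4 := by nlinarith [h4]
      nlinarith [h4', hL4, hLq]
    -- final chain
    show (((q + 1) + ((Nat.log q t + 1)^2)^2 : ℕ) : ℝ) / (Nat.primeCounting t : ℝ)
        ≤ Real.log (t:ℝ) ^ 5 / ((1/498) * (t:ℝ) + 0)
    rw [div_le_div_iff₀ hπpos (by rw [add_zero]; positivity)]
    have hb0 : (0:ℝ) ≤ (((q + 1) + ((Nat.log q t + 1)^2)^2 : ℕ) : ℝ) := by positivity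
    have hmul := mul_le_mul hbad hcheb (le_of_lt hxpos) (by positivity : (0:ℝ) ≤ 83 * L^4)
    rw [add_zero]
    calc (((q + 1) + ((Nat.log q t + 1)^2)^2 : ℕ) : ℝ) * (1/498 * (t:ℝ))
        = ((((q + 1) + ((Nat.log q t + 1)^2)^2 : ℕ) : ℝ) * x) / 498 := by rw [hxdef]; ring
    _ ≤ (83 * L^4 * (6 * L * (Nat.primeCounting t : ℝ))) / 498 := by
        apply div_le_div_of_nonneg_right hmul (by norm_num)
    _ = L ^ 5 * (Nat.primeCounting t : ℝ) := by ring
    _ = Real.log (t:ℝ) ^ 5 * (Nat.primeCounting t : ℝ) := by rw [hLdef]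
  · have := (Real.tendsto_pow_log_div_mul_add_atTop (1/498 : ℝ) 0 5 (by norm_num)).comp
      tendsto_natCast_atTop_atTop
    simpa [Function.comp_def] using this

/-- Let `q ≥ 2`. Define `G_t` to be the set of primes `p` with `q < p ≤ t` whose
multiplicative order of `q` mod `p` is at least `(log_q t)²`, and let `π(t)` be the prime
counting function. Then `lim_{t→∞} |G_t|/π(t) = 1`. -/
theorem density_of_primes_with_large_order (q : ℕ) (hq : 2 ≤ q) :
    Filter.Tendsto
      (fun t : ℕ =>
        (Nat.card {p : ℕ // p.Prime ∧ q < p ∧ p ≤ t ∧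
            (Real.logb q t) ^ 2 ≤ (orderOf (q : ZMod p) : ℝ)} : ℝ) /
          (Nat.primeCounting t : ℝ))
      Filter.atTop (nhds 1) := by
  classical
  have hbad0 := bad_tendsto_zero q hq
  have hone : Filter.Tendsto
      (fun t : ℕ => 1 - (((q + 1) + ((Nat.log q t + 1)^2)^2 : ℕ) : ℝ) /
        (Nat.primeCounting t : ℝ)) atTop (nhds 1) := by
    have h := (tendsto_const_nhds (x := (1:ℝ)) (f := atTop (α := ℕ))).sub hbad0
    simpa using h
  apply tendsto_of_tendsto_of_tendsto_of_le_of_le' hone tendsto_const_nhds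
  · filter_upwards [eventually_ge_atTop 2] with t ht
    have hπ1 : 1 ≤ Nat.primeCounting t := by
      have : Nat.primeCounting t ≠ 0 := by
        rw [Ne, Nat.primeCounting_eq_zero_iff]; omega
      omega
    have hπpos : (0:ℝ) < (Nat.primeCounting t : ℝ) := by exact_mod_cast hπ1
    rw [nat_card_eq]
    have hlb := count_lb q t hq (by omega)
    have hlb' : (Nat.primeCounting t : ℝ) ≤
        (((Finset.range (t+1)).filter (fun p => p.Prime ∧ q < p ∧
          (Real.logb q t) ^ 2 ≤ ((orderOf (q : ZMod p) : ℕ) : ℝ))).card : ℝ)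
        + (((q + 1) + ((Nat.log q t + 1)^2)^2 : ℕ) : ℝ) := by exact_mod_cast hlb
    rw [sub_le_iff_le_add, ← add_div, one_le_div hπpos]
    linarith
  · filter_upwards [eventually_ge_atTop 2] with t ht
    rw [nat_card_eq]
    apply div_le_one_of_le₀
    · exact_mod_cast count_ub q t
    · positivity
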